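/- For z ∈ ℂ with z not a nonpositive integer and n ∈ ℕ, (ψ'(z) - ψ(z)²)/Γ(z) = (z)_n · (ψ'(z+n) - ψ(z+n)²)/Γ(z+n) + 2 ∑_{j=1}^{n} (z)_{j-1} · ψ(z+j)/Γ(z+j). -/

import Mathlib

open Filter Topology

/-- The digamma function ψ = Γ'/Γ on ℂ. -/
noncomputable def digamma (z : ℂ) : ℂ := deriv Complex.Gamma z / Complex.Gamma z

lemma eventually_ne_negNat {z : ℂ} (hz : ∀ m : ℕ, z ≠ -(m : ℂ)) :
    ∀ᶠ w in 𝓝 z, ∀ m : ℕ, w ≠ -(m : ℂ) := by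
  have hd := Complex.differentiableAt_Gamma z hz
  have hc : ContinuousAt Complex.Gamma z := hd.continuousAt
  have hne : Complex.Gamma z ≠ 0 := Complex.Gamma_ne_zero hz
  filter_upwards [hc.eventually_ne hne] with w hw
  intro m hm
  exact hw (by rw [hm]; exact (Complex.Gamma_eq_zero_iff _).mpr ⟨m, rfl⟩)

lemma deriv_Gamma_differentiableAt {z : ℂ} (hz : ∀ m : ℕ, z ≠ -(m : ℂ)) :
    DifferentiableAt ℂ (deriv Complex.Gamma) z := by
  have h := (eventually_ne_negNat hz).mono (fun w hw => Complex.differentiableAt_Gamma w hw)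
  rw [eventually_nhds_iff] at h
  obtain ⟨U, hU, hUopen, hzU⟩ := h
  have hA : AnalyticOnNhd ℂ Complex.Gamma U :=
    DifferentiableOn.analyticOnNhd (fun w hw => (hU w hw).differentiableWithinAt) hUopen
  exact ((hA.deriv) z hzU).differentiableAt

lemma deriv_Gamma_add_one {z : ℂ} (hz : ∀ m : ℕ, z ≠ -(m : ℂ)) :
    deriv Complex.Gamma (z + 1) = Complex.Gamma z + z * deriv Complex.Gamma z := by
  have hz0 : z ≠ 0 := by simpa using hz 0
  have hev : (fun w => Complex.Gamma (w + 1)) =ᶠ[𝓝 z] (fun w => w * Complex.Gamma w) := by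
    filter_upwards [eventually_ne_negNat hz] with w hw
    exact Complex.Gamma_add_one w (by simpa using hw 0)
  calc deriv Complex.Gamma (z + 1) = deriv (fun w => Complex.Gamma (w + 1)) z := by
        rw [deriv_comp_add_const]
    _ = deriv (fun w => w * Complex.Gamma w) z := hev.deriv_eq
    _ = Complex.Gamma z + z * deriv Complex.Gamma z := by
        rw [deriv_fun_mul differentiableAt_fun_id (Complex.differentiableAt_Gamma z hz)]
        simp

lemma digamma_add_one {z : ℂ} (hz : ∀ m : ℕ, z ≠ -(m : ℂ)) :
    digamma (z + 1) = digamma z + 1 / z := by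
  have hz0 : z ≠ 0 := by simpa using hz 0
  have hG : Complex.Gamma z ≠ 0 := Complex.Gamma_ne_zero hz
  rw [digamma, digamma, deriv_Gamma_add_one hz, Complex.Gamma_add_one z hz0]
  field_simp
  ring

lemma digamma_differentiableAt {z : ℂ} (hz : ∀ m : ℕ, z ≠ -(m : ℂ)) :
    DifferentiableAt ℂ digamma z :=
  (deriv_Gamma_differentiableAt hz).div (Complex.differentiableAt_Gamma z hz)
    (Complex.Gamma_ne_zero hz)

lemma deriv_digamma_add_one {z : ℂ} (hz : ∀ m : ℕ, z ≠ -(m : ℂ)) :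
    deriv digamma (z + 1) = deriv digamma z - 1 / z ^ 2 := by
  have hz0 : z ≠ 0 := by simpa using hz 0
  have hev : (fun w => digamma (w + 1)) =ᶠ[𝓝 z] (fun w => digamma w + 1 / w) := by
    filter_upwards [eventually_ne_negNat hz] with w hw
    exact digamma_add_one hw
  calc deriv digamma (z + 1) = deriv (fun w => digamma (w + 1)) z := by
        rw [deriv_comp_add_const]
    _ = deriv (fun w => digamma w + 1 / w) z := hev.deriv_eq
    _ = deriv digamma z - 1 / z ^ 2 := by
        have hd : DifferentiableAt ℂ (fun w : ℂ => 1 / w) z := by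
          simpa [one_div] using (differentiableAt_inv hz0)
        rw [deriv_fun_add (digamma_differentiableAt hz) hd]
        simp [one_div, deriv_inv, sub_eq_add_neg]

lemma one_step {z : ℂ} (hz : ∀ m : ℕ, z ≠ -(m : ℂ)) :
    (deriv digamma z - (digamma z) ^ 2) / Complex.Gamma z
      = z * ((deriv digamma (z + 1) - (digamma (z + 1)) ^ 2) / Complex.Gamma (z + 1))
        + 2 * (digamma (z + 1) / Complex.Gamma (z + 1)) := by
  have hz0 : z ≠ 0 := by simpa using hz 0
  have hG : Complex.Gamma z ≠ 0 := Complex.Gamma_ne_zero hz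
  rw [Complex.Gamma_add_one z hz0, digamma_add_one hz, deriv_digamma_add_one hz]
  field_simp
  ring

lemma main_aux (z : ℂ) (hz : ∀ m : ℕ, z ≠ -(m : ℂ)) (n : ℕ) :
    (deriv digamma z - (digamma z) ^ 2) / Complex.Gamma z
      = (ascPochhammer ℂ n).eval z
          * ((deriv digamma (z + n) - (digamma (z + n)) ^ 2) / Complex.Gamma (z + n))
        + 2 * ∑ j ∈ Finset.Icc 1 n,
            (ascPochhammer ℂ (j - 1)).eval z * (digamma (z + j) / Complex.Gamma (z + j)) := by
  induction n with
  | zero => simp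
  | succ n ih =>
    have hzn : ∀ m : ℕ, z + n ≠ -(m : ℂ) := fun m hm =>
      hz (m + n) (by push_cast; linear_combination hm)
    have hcast : (z + ((n + 1 : ℕ) : ℂ)) = z + n + 1 := by push_cast; ring
    rw [ih, Finset.sum_Icc_succ_top (by omega : 1 ≤ n + 1), one_step hzn,
      ascPochhammer_succ_right]
    simp only [Polynomial.eval_mul, Polynomial.eval_add, Polynomial.eval_X,
      Polynomial.eval_natCast, hcast, Nat.add_sub_cancel]
    ring

theorem trigamma_sub_digamma_sq_div_Gamma_shift (z : ℂ) (hz : ∀ m : ℕ, z ≠ -(m : ℂ))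
    (n : ℕ) (hn : 0 < n) :
    (deriv digamma z - (digamma z) ^ 2) / Complex.Gamma z
      = (ascPochhammer ℂ n).eval z
          * ((deriv digamma (z + n) - (digamma (z + n)) ^ 2) / Complex.Gamma (z + n))
        + 2 * ∑ j ∈ Finset.Icc 1 n,
            (ascPochhammer ℂ (j - 1)).eval z * (digamma (z + j) / Complex.Gamma (z + j)) :=
  main_aux z hz n
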